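/- Let a, b be real numbers with 0 < a < b and let H be the diagonal 2×2 matrix diag(a, b). Then the set O(Λ) of matrices U ∈ GL₂(ℤ) (integer 2×2 matrices with determinant ±1) satisfying (↑U)ᵀ H (↑U) = H, where ↑U denotes the real matrix obtained from U by coercing entries, has exactly 4 elements, namely the four diagonal sign matrices diag(±1, ±1). -/

import Mathlib

open Matrix

/-- The point group `O(Λ)` of a rank-2 lattice with Gram matrix `H`: integer `2×2`
matrices of determinant `±1` preserving `H` (via real coercion of entries). -/
def latticePointGroup (H : Matrix (Fin 2) (Fin 2) ℝ) : Set (Matrix (Fin 2) (Fin 2) ℤ) :=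
  {U | (U.det = 1 ∨ U.det = -1) ∧
        (U.map (Int.cast : ℤ → ℝ))ᵀ * H * U.map (Int.cast : ℤ → ℝ) = H}

/-- **Rectangular case of the rank-2 Bravais test.** For `H = diag(a, b)` with
`0 < a < b`, the point group has exactly four elements, the diagonal sign matrices. -/
theorem pointGroup_rectangular
    (a b : ℝ) (ha : 0 < a) (hab : a < b) :
    (latticePointGroup !![a, 0; 0, b]).ncard = 4 ∧
      latticePointGroup !![a, 0; 0, b] =
        {!![1, 0; 0, 1], !![1, 0; 0, -1], !![-1, 0; 0, 1], !![-1, 0; 0, -1]} := by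
  have hb : 0 < b := ha.trans hab
  have hset : latticePointGroup !![a, 0; 0, b] =
      {!![1, 0; 0, 1], !![1, 0; 0, -1], !![-1, 0; 0, 1], !![-1, 0; 0, -1]} := by
    ext U
    constructor
    · rintro ⟨-, hU⟩
      have h00 := congrFun (congrFun hU 0) 0
      have h01 := congrFun (congrFun hU 0) 1
      have h11 := congrFun (congrFun hU 1) 1
      simp [Matrix.mul_apply, Fin.sum_univ_two] at h00 h01 h11
      -- the lower-left entry vanishes
      have hr : U 1 0 = 0 := by
        by_contra hr
        have h1 : (1 : ℝ) ≤ (U 1 0 : ℝ) * (U 1 0 : ℝ) := by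
          have : (1 : ℤ) ≤ U 1 0 * U 1 0 := by
            rcases lt_or_gt_of_ne hr with h | h <;> nlinarith
          exact_mod_cast this
        nlinarith [mul_self_nonneg ((U 0 0 : ℝ))]
      rw [hr] at h00 h01
      push_cast at h00 h01
      have hpR : (U 0 0 : ℝ) * (U 0 0 : ℝ) = 1 := by
        apply mul_left_cancel₀ ha.ne'
        rw [mul_one]; linear_combination h00
      have hp : U 0 0 * U 0 0 = 1 := by exact_mod_cast hpR
      have hp' : U 0 0 = 1 ∨ U 0 0 = -1 :=
        Int.isUnit_iff.mp (IsUnit.of_mul_eq_one _ hp)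
      have hpne : (U 0 0 : ℝ) ≠ 0 := by
        rcases hp' with h | h <;> rw [h] <;> norm_num
      have hq : U 0 1 = 0 := by
        have h01' : (U 0 0 : ℝ) * a * (U 0 1) = 0 := by linarith
        have : (U 0 1 : ℝ) = 0 := by
          rcases mul_eq_zero.mp h01' with h | h
          · rcases mul_eq_zero.mp h with h | h
            · exact absurd h hpne
            · exact absurd h ha.ne'
          · exact h
        exact_mod_cast this
      rw [hq] at h11
      push_cast at h11
      have hsR : (U 1 1 : ℝ) * (U 1 1 : ℝ) = 1 := by
        apply mul_left_cancel₀ hb.ne'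
        rw [mul_one]; linear_combination h11
      have hs : U 1 1 * U 1 1 = 1 := by exact_mod_cast hsR
      have hs' : U 1 1 = 1 ∨ U 1 1 = -1 :=
        Int.isUnit_iff.mp (IsUnit.of_mul_eq_one _ hs)
      have hUeq : U = !![U 0 0, U 0 1; U 1 0, U 1 1] := Matrix.etaExpand_eq U |>.symm
      rw [hUeq, hq, hr]
      rcases hp' with h1 | h1 <;> rcases hs' with h2 | h2 <;> rw [h1, h2] <;>
        simp [Set.mem_insert_iff]
    · intro hU
      simp only [Set.mem_insert_iff, Set.mem_singleton_iff] at hU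
      rcases hU with rfl | rfl | rfl | rfl <;>
        refine ⟨by simp [Matrix.det_fin_two_of], ?_⟩ <;>
        · ext i j
          fin_cases i <;> fin_cases j <;>
            simp [Matrix.mul_apply, Fin.sum_univ_two]
  refine ⟨?_, hset⟩
  rw [hset]
  rw [Set.ncard_insert_of_notMem (by
        simp only [Set.mem_insert_iff, Set.mem_singleton_iff]
        push_neg
        refine ⟨by decide, by decide, by decide⟩),
      Set.ncard_insert_of_notMem (by
        simp only [Set.mem_insert_iff, Set.mem_singleton_iff]
        push_neg
        refine ⟨by decide, by decide⟩),
      Set.ncard_insert_of_notMem (by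
        simp only [Set.mem_singleton_iff]
        decide),
      Set.ncard_singleton]
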